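/- For every horizon T ≥ 1 there exists a pure Bob strategy S_B (a function assigning a choice b_t ∈ {L,R} to each prefix (a_1,…,a_t; b_1,…,b_{t−1}), depending on v_B and T) such that for every cut sequence a_1,…,a_T ∈ [0,1] (equivalently, against every Alice strategy), the resulting trajectory satisfies Σ_{t=1}^T u_A^t ≤ T/2 + (Δ/(2δ) + 2)·√T and Σ_{t=1}^T u_B^t ≥ T/2 − √T. -/

import Mathlib

open MeasureTheory

/-- Bob's choice of the left or right piece. -/
inductive Choice
  | L
  | R
deriving DecidableEq

instance : Fintype Choice :=
  ⟨{Choice.L, Choice.R}, fun x => by cases x <;> simp⟩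

/-- The cumulative valuation `V(x) = ∫_0^x v`. -/
noncomputable def cumul (v : ℝ → ℝ) (x : ℝ) : ℝ := ∫ y in (0:ℝ)..x, v y

/-- `v` is an integrable value density on `[0,1]`, bounded between `lo` and `hi`,
integrating to `1`. -/
def IsDensity (lo hi : ℝ) (v : ℝ → ℝ) : Prop :=
  IntervalIntegrable v volume 0 1 ∧
  (∀ x ∈ Set.Icc (0:ℝ) 1, lo ≤ v x ∧ v x ≤ hi) ∧
  (∫ y in (0:ℝ)..1, v y) = 1

/-- Alice's round-`t` utility: if Bob picks `L` she gets `[a_t,1]`, else `[0,a_t]`. -/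
noncomputable def uA (vA : ℝ → ℝ) (a : ℕ → ℝ) (b : ℕ → Choice) (t : ℕ) : ℝ :=
  if b t = Choice.L then 1 - cumul vA (a t) else cumul vA (a t)

/-- Bob's round-`t` utility: if he picks `L` he gets `[0,a_t]`, else `[a_t,1]`. -/
noncomputable def uB (vB : ℝ → ℝ) (a : ℕ → ℝ) (b : ℕ → Choice) (t : ℕ) : ℝ :=
  if b t = Choice.L then cumul vB (a t) else 1 - cumul vB (a t)

/-- A pure Alice strategy: given the history `(a_1,…,a_t; b_1,…,b_t)`, produce the
next cut `a_{t+1}`. -/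
def AliceStrategy : Type := ∀ t : ℕ, (Fin t → ℝ) → (Fin t → Choice) → ℝ

/-- A pure (sequential) Bob strategy: given `(a_1,…,a_{t+1}; b_1,…,b_t)`, produce the
next choice `b_{t+1}`. -/
def BobStrategy : Type := ∀ t : ℕ, (Fin (t+1) → ℝ) → (Fin t → Choice) → Choice

/-- The trajectory `(a,b)` is consistent with Alice's strategy `S` over horizon `T`. -/
def AliceConsistent (S : AliceStrategy) (a : ℕ → ℝ) (b : ℕ → Choice) (T : ℕ) : Prop :=
  ∀ t : ℕ, t < T → a (t+1) = S t (fun i => a (i.1+1)) (fun i => b (i.1+1))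

/-- The trajectory `(a,b)` is consistent with Bob's strategy `S` over horizon `T`. -/
def BobConsistent (S : BobStrategy) (a : ℕ → ℝ) (b : ℕ → Choice) (T : ℕ) : Prop :=
  ∀ t : ℕ, t < T → b (t+1) = S t (fun i => a (i.1+1)) (fun i => b (i.1+1))

/-- Alice's Stackelberg value `u_A^* = max(V_A(m_B), 1 - V_A(m_B))`. -/
noncomputable def stackValue (vA : ℝ → ℝ) (mB : ℝ) : ℝ :=
  max (cumul vA mB) (1 - cumul vA mB)

/-! ### Auxiliary lemmas -/

/-- Upper bound for an "alternating" sum: within a set `S`, the summand is `f t`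
at elements with an even number of predecessors in `S` and `1 - f t` otherwise. -/
private lemma alt_upper_aux (f : ℕ → ℝ) (e : ℝ) :
    ∀ n : ℕ, ∀ S : Finset ℕ, S.card = n →
      (∀ s ∈ S, ∀ t ∈ S, f s - f t ≤ e) →
      ((Even n →
          ∑ t ∈ S, (if Even ((S.filter (· < t)).card) then f t else 1 - f t)
            ≤ (n : ℝ) / 2 * (1 + e)) ∧
        (∀ M ∈ S, (∀ s ∈ S, s ≤ M) → ¬ Even n →
          ∑ t ∈ S, (if Even ((S.filter (· < t)).card) then f t else 1 - f t)
            ≤ ((n : ℝ) - 1) / 2 * (1 + e) + f M)) := by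
  intro n
  induction n with
  | zero =>
    intro S hS _
    have hSempty : S = ∅ := Finset.card_eq_zero.mp hS
    subst hSempty
    refine ⟨fun _ => by simp, fun M hM _ _ => by simp at hM⟩
  | succ n ih =>
    intro S hS hdiff
    have hne : S.Nonempty := Finset.card_pos.mp (by omega)
    set M := S.max' hne with hMdef
    have hMS : M ∈ S := S.max'_mem hne
    have hcard' : (S.erase M).card = n := by
      rw [Finset.card_erase_of_mem hMS, hS]
      omega
    have hfilt : ∀ t ∈ S.erase M, S.filter (· < t) = (S.erase M).filter (· < t) := by
      intro t ht
      have htS : t ∈ S := Finset.mem_of_mem_erase ht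
      have htM : t ≠ M := Finset.ne_of_mem_erase ht
      have htle : t ≤ M := S.le_max' t htS
      ext u
      simp only [Finset.mem_filter, Finset.mem_erase]
      constructor
      · rintro ⟨huS, hut⟩
        exact ⟨⟨by omega, huS⟩, hut⟩
      · rintro ⟨⟨_, huS⟩, hut⟩
        exact ⟨huS, hut⟩
    have hfM : S.filter (· < M) = S.erase M := by
      ext u
      simp only [Finset.mem_filter, Finset.mem_erase]
      constructor
      · rintro ⟨huS, hlt⟩
        exact ⟨Nat.ne_of_lt hlt, huS⟩
      · rintro ⟨hneu, huS⟩
        exact ⟨huS, lt_of_le_of_ne (S.le_max' u huS) hneu⟩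
    have hsplit :
        ∑ t ∈ S, (if Even ((S.filter (· < t)).card) then f t else 1 - f t)
          = (∑ t ∈ S.erase M,
              (if Even (((S.erase M).filter (· < t)).card) then f t else 1 - f t))
            + (if Even n then f M else 1 - f M) := by
      rw [← Finset.sum_erase_add S _ hMS]
      congr 1
      · exact Finset.sum_congr rfl fun t ht => by rw [hfilt t ht]
      · rw [hfM, hcard']
    have hdiff' : ∀ s ∈ S.erase M, ∀ t ∈ S.erase M, f s - f t ≤ e :=
      fun s hs t ht => hdiff s (Finset.mem_of_mem_erase hs) t (Finset.mem_of_mem_erase ht)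
    have IH := ih (S.erase M) hcard' hdiff'
    rcases Nat.even_or_odd n with hn | hn
    · refine ⟨fun hcontra => ?_, fun M' hM' hmax _ => ?_⟩
      · rw [Nat.even_add_one] at hcontra
        exact absurd hn hcontra
      · have hMM' : M' = M := le_antisymm (S.le_max' M' hM') (hmax M hMS)
        subst hMM'
        have h1 := IH.1 hn
        rw [hsplit, if_pos hn]
        push_cast
        linarith
    · have hn' : ¬ Even n := Nat.not_even_iff_odd.mpr hn
      have hne' : (S.erase M).Nonempty := by
        rw [← Finset.card_pos, hcard']
        exact hn.pos
      have hM'mem : (S.erase M).max' hne' ∈ S.erase M := Finset.max'_mem _ hne'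
      have h2 := IH.2 ((S.erase M).max' hne') hM'mem
        (fun s hs => Finset.le_max' _ s hs) hn'
      have hfe : f ((S.erase M).max' hne') - f M ≤ e :=
        hdiff _ (Finset.mem_of_mem_erase hM'mem) M hMS
      refine ⟨fun _ => ?_, fun M'' hM'' hmax hcontra => ?_⟩
      · rw [hsplit, if_neg hn']
        push_cast
        linarith
      · exact absurd (Nat.even_add_one.mpr hn') hcontra
/-- Lower bound analogue of `alt_upper_aux`. -/
private lemma alt_lower_aux (f : ℕ → ℝ) (e : ℝ) :
    ∀ n : ℕ, ∀ S : Finset ℕ, S.card = n →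
      (∀ s ∈ S, ∀ t ∈ S, f s - f t ≤ e) →
      ((Even n →
          (n : ℝ) / 2 * (1 - e)
            ≤ ∑ t ∈ S, (if Even ((S.filter (· < t)).card) then f t else 1 - f t)) ∧
        (∀ M ∈ S, (∀ s ∈ S, s ≤ M) → ¬ Even n →
          ((n : ℝ) - 1) / 2 * (1 - e) + f M
            ≤ ∑ t ∈ S, (if Even ((S.filter (· < t)).card) then f t else 1 - f t))) := by
  intro n
  induction n with
  | zero =>
    intro S hS _
    have hSempty : S = ∅ := Finset.card_eq_zero.mp hS
    subst hSempty
    refine ⟨fun _ => by simp, fun M hM _ _ => by simp at hM⟩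
  | succ n ih =>
    intro S hS hdiff
    have hne : S.Nonempty := Finset.card_pos.mp (by omega)
    set M := S.max' hne with hMdef
    have hMS : M ∈ S := S.max'_mem hne
    have hcard' : (S.erase M).card = n := by
      rw [Finset.card_erase_of_mem hMS, hS]
      omega
    have hfilt : ∀ t ∈ S.erase M, S.filter (· < t) = (S.erase M).filter (· < t) := by
      intro t ht
      have htS : t ∈ S := Finset.mem_of_mem_erase ht
      have htM : t ≠ M := Finset.ne_of_mem_erase ht
      have htle : t ≤ M := S.le_max' t htS
      ext u
      simp only [Finset.mem_filter, Finset.mem_erase]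
      constructor
      · rintro ⟨huS, hut⟩
        exact ⟨⟨by omega, huS⟩, hut⟩
      · rintro ⟨⟨_, huS⟩, hut⟩
        exact ⟨huS, hut⟩
    have hfM : S.filter (· < M) = S.erase M := by
      ext u
      simp only [Finset.mem_filter, Finset.mem_erase]
      constructor
      · rintro ⟨huS, hlt⟩
        exact ⟨Nat.ne_of_lt hlt, huS⟩
      · rintro ⟨hneu, huS⟩
        exact ⟨huS, lt_of_le_of_ne (S.le_max' u huS) hneu⟩
    have hsplit :
        ∑ t ∈ S, (if Even ((S.filter (· < t)).card) then f t else 1 - f t)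
          = (∑ t ∈ S.erase M,
              (if Even (((S.erase M).filter (· < t)).card) then f t else 1 - f t))
            + (if Even n then f M else 1 - f M) := by
      rw [← Finset.sum_erase_add S _ hMS]
      congr 1
      · exact Finset.sum_congr rfl fun t ht => by rw [hfilt t ht]
      · rw [hfM, hcard']
    have hdiff' : ∀ s ∈ S.erase M, ∀ t ∈ S.erase M, f s - f t ≤ e :=
      fun s hs t ht => hdiff s (Finset.mem_of_mem_erase hs) t (Finset.mem_of_mem_erase ht)
    have IH := ih (S.erase M) hcard' hdiff'
    rcases Nat.even_or_odd n with hn | hn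
    · refine ⟨fun hcontra => ?_, fun M' hM' hmax _ => ?_⟩
      · rw [Nat.even_add_one] at hcontra
        exact absurd hn hcontra
      · have hMM' : M' = M := le_antisymm (S.le_max' M' hM') (hmax M hMS)
        subst hMM'
        have h1 := IH.1 hn
        rw [hsplit, if_pos hn]
        push_cast
        linarith
    · have hn' : ¬ Even n := Nat.not_even_iff_odd.mpr hn
      have hne' : (S.erase M).Nonempty := by
        rw [← Finset.card_pos, hcard']
        exact hn.pos
      have hM'mem : (S.erase M).max' hne' ∈ S.erase M := Finset.max'_mem _ hne'
      have h2 := IH.2 ((S.erase M).max' hne') hM'mem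
        (fun s hs => Finset.le_max' _ s hs) hn'
      have hfe : f M - f ((S.erase M).max' hne') ≤ e :=
        hdiff M hMS _ (Finset.mem_of_mem_erase hM'mem)
      refine ⟨fun _ => ?_, fun M'' hM'' hmax hcontra => ?_⟩
      · rw [hsplit, if_neg hn']
        push_cast
        linarith
      · exact absurd (Nat.even_add_one.mpr hn') hcontra

private lemma cumul_sub_integral (v : ℝ → ℝ) (hv : IntervalIntegrable v volume 0 1)
    {x y : ℝ} (hx : x ∈ Set.Icc (0:ℝ) 1) (hy : y ∈ Set.Icc (0:ℝ) 1) :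
    cumul v y - cumul v x = ∫ s in x..y, v s := by
  have hsub : ∀ {z : ℝ}, z ∈ Set.Icc (0:ℝ) 1 → IntervalIntegrable v volume 0 z := by
    intro z hz
    refine hv.mono_set ?_
    rw [Set.uIcc_of_le hz.1, Set.uIcc_of_le (zero_le_one)]
    exact Set.Icc_subset_Icc_right hz.2
  unfold cumul
  exact intervalIntegral.integral_interval_sub_left (hsub hy) (hsub hx)

private lemma cumul_diff_le (lo hi : ℝ) (v : ℝ → ℝ) (hv : IsDensity lo hi v)
    {x y : ℝ} (hx : x ∈ Set.Icc (0:ℝ) 1) (hy : y ∈ Set.Icc (0:ℝ) 1) (hxy : x ≤ y) :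
    lo * (y - x) ≤ cumul v y - cumul v x ∧ cumul v y - cumul v x ≤ hi * (y - x) := by
  obtain ⟨hint, hbd, -⟩ := hv
  rw [cumul_sub_integral v hint hx hy]
  have hInt : IntervalIntegrable v volume x y := by
    refine hint.mono_set ?_
    rw [Set.uIcc_of_le hxy, Set.uIcc_of_le (zero_le_one)]
    exact Set.Icc_subset_Icc hx.1 hy.2
  have hIcc : Set.Icc x y ⊆ Set.Icc (0:ℝ) 1 := Set.Icc_subset_Icc hx.1 hy.2
  constructor
  · have h := intervalIntegral.integral_mono_on hxy (intervalIntegrable_const (c := lo)) hInt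
      (fun s hs => (hbd s (hIcc hs)).1)
    rw [intervalIntegral.integral_const] at h
    calc lo * (y - x) = (y - x) • lo := by rw [smul_eq_mul, mul_comm]
      _ ≤ _ := h
  · have h := intervalIntegral.integral_mono_on hxy hInt (intervalIntegrable_const (c := hi))
      (fun s hs => (hbd s (hIcc hs)).2)
    rw [intervalIntegral.integral_const] at h
    calc _ ≤ (y - x) • hi := h
      _ = hi * (y - x) := by rw [smul_eq_mul, mul_comm]

private lemma cumul_mem_Icc (lo hi : ℝ) (v : ℝ → ℝ) (hlo : 0 < lo) (hv : IsDensity lo hi v)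
    {x : ℝ} (hx : x ∈ Set.Icc (0:ℝ) 1) :
    cumul v x ∈ Set.Icc (0:ℝ) 1 := by
  have h0 : cumul v 0 = 0 := intervalIntegral.integral_same
  have h01 : (0:ℝ) ∈ Set.Icc (0:ℝ) 1 := by norm_num
  have h11 : (1:ℝ) ∈ Set.Icc (0:ℝ) 1 := by norm_num
  have h1 : cumul v 1 = 1 := hv.2.2
  have hl := (cumul_diff_le lo hi v hv h01 hx hx.1).1
  have hr := (cumul_diff_le lo hi v hv hx h11 hx.2).1
  rw [h0] at hl
  rw [h1] at hr
  obtain ⟨hx0, hx1⟩ := hx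
  constructor
  · nlinarith
  · nlinarith

private lemma abs_cumul_diff (lo hi : ℝ) (v : ℝ → ℝ) (hlo : 0 ≤ lo) (hv : IsDensity lo hi v)
    {x y : ℝ} (hx : x ∈ Set.Icc (0:ℝ) 1) (hy : y ∈ Set.Icc (0:ℝ) 1) :
    lo * |x - y| ≤ |cumul v x - cumul v y| ∧ |cumul v x - cumul v y| ≤ hi * |x - y| := by
  rcases le_total x y with h | h
  · obtain ⟨h1, h2⟩ := cumul_diff_le lo hi v hv hx hy h
    have hd : 0 ≤ cumul v y - cumul v x := by nlinarith [mul_nonneg hlo (by linarith : (0:ℝ) ≤ y - x)]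
    have habs : |x - y| = y - x := by
      rw [abs_sub_comm, abs_of_nonneg (by linarith)]
    have habs2 : |cumul v x - cumul v y| = cumul v y - cumul v x := by
      rw [abs_sub_comm, abs_of_nonneg hd]
    rw [habs, habs2]
    exact ⟨h1, h2⟩
  · obtain ⟨h1, h2⟩ := cumul_diff_le lo hi v hv hy hx h
    have hd : 0 ≤ cumul v x - cumul v y := by nlinarith [mul_nonneg hlo (by linarith : (0:ℝ) ≤ x - y)]
    have habs : |x - y| = x - y := abs_of_nonneg (by linarith)
    have habs2 : |cumul v x - cumul v y| = cumul v x - cumul v y := abs_of_nonneg hd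
    rw [habs, habs2]
    exact ⟨h1, h2⟩

private lemma blk_close (K : ℕ) (hK : 1 ≤ K) {x y : ℝ}
    (hx0 : 0 ≤ x) (hx1 : x ≤ 1) (hy0 : 0 ≤ y)
    (h : min ⌊(K:ℝ) * x⌋₊ (K - 1) = min ⌊(K:ℝ) * y⌋₊ (K - 1)) :
    x - y ≤ 1 / K := by
  have hKpos : (0:ℝ) < K := by exact_mod_cast Nat.pos_of_ne_zero (by omega)
  have h1 : (K:ℝ) * x ≤ ((min ⌊(K:ℝ) * x⌋₊ (K - 1) : ℕ) : ℝ) + 1 := by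
    rcases le_or_gt ⌊(K:ℝ) * x⌋₊ (K - 1) with hc | hc
    · rw [min_eq_left hc]
      exact le_of_lt (Nat.lt_floor_add_one _)
    · rw [min_eq_right (le_of_lt hc)]
      have hcast : ((K - 1 : ℕ) : ℝ) + 1 = (K : ℝ) := by
        have : (K - 1 : ℕ) + 1 = K := by omega
        exact_mod_cast congrArg (Nat.cast : ℕ → ℝ) this
      rw [hcast]
      nlinarith
  have h2 : ((min ⌊(K:ℝ) * y⌋₊ (K - 1) : ℕ) : ℝ) ≤ (K:ℝ) * y := by
    have hmin : (min ⌊(K:ℝ) * y⌋₊ (K - 1) : ℕ) ≤ ⌊(K:ℝ) * y⌋₊ := min_le_left _ _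
    have hfl : ((⌊(K:ℝ) * y⌋₊ : ℕ) : ℝ) ≤ (K:ℝ) * y := Nat.floor_le (by positivity)
    calc ((min ⌊(K:ℝ) * y⌋₊ (K - 1) : ℕ) : ℝ) ≤ ((⌊(K:ℝ) * y⌋₊ : ℕ) : ℝ) := by exact_mod_cast hmin
      _ ≤ (K:ℝ) * y := hfl
  rw [h] at h1
  rw [le_div_iff₀ hKpos]
  nlinarith

private lemma fin_card_eq (p : ℕ → Prop) [DecidablePred p] (m : ℕ) :
    (Finset.univ.filter (fun i : Fin m => p (i.1 + 1))).card
      = ((Finset.Icc 1 m).filter p).card := by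
  rw [Finset.card_filter, Finset.card_filter]
  rw [Fin.sum_univ_eq_sum_range (fun j => if p (j + 1) then 1 else 0) m]
  have hIcc : Finset.Icc 1 m = Finset.Ico 1 (m + 1) := by
    ext x; simp [Nat.lt_succ_iff]
  rw [hIcc, Finset.sum_Ico_eq_sum_range]
  simp only [Nat.add_sub_cancel]
  exact Finset.sum_congr rfl fun i _ => by rw [Nat.add_comm 1 i]

/-- In the sequential setting, Bob has a pure strategy guaranteeing, against
every cut sequence in `[0,1]`, that Alice's total payoff is at most
`T/2 + (Δ/(2δ)+2)·√T` and Bob's total payoff is at least `T/2 − √T`. -/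
theorem bob_enforces_equitable_payoffs
    (δ Δ : ℝ) (hδ : 0 < δ) (hδΔ : δ ≤ Δ)
    (vA vB : ℝ → ℝ) (hA : IsDensity δ Δ vA) (hB : IsDensity δ Δ vB)
    (T : ℕ) (hT : 1 ≤ T) :
    ∃ SB : BobStrategy,
      ∀ (a : ℕ → ℝ), (∀ t : ℕ, 1 ≤ t → t ≤ T → a t ∈ Set.Icc (0:ℝ) 1) →
      ∀ b : ℕ → Choice, BobConsistent SB a b T →
        (∑ t ∈ Finset.Icc 1 T, uA vA a b t ≤
            (T : ℝ) / 2 + (Δ / (2 * δ) + 2) * Real.sqrt T) ∧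
        ((T : ℝ) / 2 - Real.sqrt T ≤ ∑ t ∈ Finset.Icc 1 T, uB vB a b t) := by
  classical
  have hT0 : (0:ℝ) ≤ T := Nat.cast_nonneg T
  set s := Real.sqrt T with hs
  have hs1 : (1:ℝ) ≤ s := by
    rw [hs, show (1:ℝ) = Real.sqrt 1 by simp]
    exact Real.sqrt_le_sqrt (by exact_mod_cast hT)
  have hss : s * s = (T:ℝ) := Real.mul_self_sqrt hT0
  set K := ⌈s⌉₊ with hKdef
  have hK1 : 1 ≤ K := Nat.one_le_ceil_iff.mpr (by linarith)
  have hKges : s ≤ (K:ℝ) := Nat.le_ceil s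
  have hKles : (K:ℝ) ≤ s + 1 := le_of_lt (Nat.ceil_lt_add_one (by linarith))
  have hKpos : (0:ℝ) < K := by
    have : (1:ℝ) ≤ (K:ℝ) := by exact_mod_cast hK1
    linarith
  set key : ℝ → ℕ := fun x => min ⌊(K:ℝ) * cumul vB x⌋₊ (K - 1) with hkeydef
  refine ⟨fun t av _ =>
      if Even ((Finset.univ.filter
        (fun i : Fin t => key (av i.castSucc) = key (av (Fin.last t)))).card)
      then Choice.R else Choice.L, ?_⟩
  intro a ha b hbc
  set km : ℕ → ℕ := fun t => key (a t) with hkmdef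
  set Sv : ℕ → Finset ℕ := fun v => (Finset.Icc 1 T).filter (fun t => km t = v) with hSvdef
  unfold BobConsistent at hbc
  -- characterization of Bob's choices along the trajectory
  have hbt : ∀ t ∈ Finset.Icc 1 T,
      b t = (if Even (((Sv (km t)).filter (· < t)).card) then Choice.R else Choice.L) := by
    intro t ht
    rw [Finset.mem_Icc] at ht
    have h1 : t - 1 < T := by omega
    have h2 := hbc (t - 1) h1
    have h3 : t - 1 + 1 = t := by omega
    simp only [h3, Fin.coe_castSucc, Fin.val_last] at h2
    have hcardeq : (Finset.univ.filter
        (fun i : Fin (t - 1) => key (a (i.1 + 1)) = key (a t))).card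
        = ((Sv (km t)).filter (· < t)).card := by
      rw [fin_card_eq (fun u => key (a u) = key (a t)) (t - 1)]
      congr 1
      ext u
      simp only [Finset.mem_filter, Finset.mem_Icc, hSvdef, hkmdef]
      constructor
      · rintro ⟨⟨hu1, hu2⟩, hu3⟩
        exact ⟨⟨⟨hu1, by omega⟩, hu3⟩, by omega⟩
      · rintro ⟨⟨⟨hu1, _⟩, hu3⟩, hu4⟩
        exact ⟨⟨hu1, by omega⟩, hu3⟩
    rw [h2, hcardeq]
  have hVB01 : ∀ t ∈ Finset.Icc 1 T, cumul vB (a t) ∈ Set.Icc (0:ℝ) 1 := by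
    intro t ht
    rw [Finset.mem_Icc] at ht
    exact cumul_mem_Icc δ Δ vB hδ hB (ha t ht.1 ht.2)
  have hVA01 : ∀ t ∈ Finset.Icc 1 T, cumul vA (a t) ∈ Set.Icc (0:ℝ) 1 := by
    intro t ht
    rw [Finset.mem_Icc] at ht
    exact cumul_mem_Icc δ Δ vA hδ hA (ha t ht.1 ht.2)
  -- points in the same block have close Bob-values
  have hclose : ∀ v : ℕ, ∀ s' ∈ Sv v, ∀ t ∈ Sv v,
      |cumul vB (a s') - cumul vB (a t)| ≤ 1 / K := by
    intro v s' hs' t ht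
    have hs'2 := Finset.mem_filter.mp hs'
    have ht2 := Finset.mem_filter.mp ht
    have hks : km s' = km t := by rw [hs'2.2, ht2.2]
    simp only [hkmdef, hkeydef] at hks
    have hxs := hVB01 s' hs'2.1
    have hxt := hVB01 t ht2.1
    have h1 : cumul vB (a s') - cumul vB (a t) ≤ 1 / K :=
      blk_close K hK1 hxs.1 hxs.2 hxt.1 hks
    have h2 : cumul vB (a t) - cumul vB (a s') ≤ 1 / K :=
      blk_close K hK1 hxt.1 hxt.2 hxs.1 hks.symm
    exact abs_sub_le_iff.mpr ⟨h1, h2⟩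
  -- points in the same block have close Alice-values
  have hcloseA : ∀ v : ℕ, ∀ s' ∈ Sv v, ∀ t ∈ Sv v,
      cumul vA (a s') - cumul vA (a t) ≤ Δ / (δ * K) := by
    intro v s' hs' t ht
    have hB' := hclose v s' hs' t ht
    have hsIcc := (Finset.mem_filter.mp hs').1
    have htIcc := (Finset.mem_filter.mp ht).1
    rw [Finset.mem_Icc] at hsIcc htIcc
    have haS := ha s' hsIcc.1 hsIcc.2
    have haT := ha t htIcc.1 htIcc.2
    have hlow := (abs_cumul_diff δ Δ vB (le_of_lt hδ) hB haS haT).1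
    have hup := (abs_cumul_diff δ Δ vA (le_of_lt hδ) hA haS haT).2
    have h5 : |a s' - a t| ≤ 1 / (δ * K) := by
      rw [le_div_iff₀ (by positivity)]
      have hc : δ * |a s' - a t| ≤ 1 / K := le_trans hlow hB'
      have hcK : δ * |a s' - a t| * K ≤ (1 / K) * K :=
        mul_le_mul_of_nonneg_right hc (le_of_lt hKpos)
      rw [one_div, inv_mul_cancel₀ (ne_of_gt hKpos)] at hcK
      linarith [hcK]
    calc cumul vA (a s') - cumul vA (a t) ≤ |cumul vA (a s') - cumul vA (a t)| := le_abs_self _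
      _ ≤ Δ * |a s' - a t| := hup
      _ ≤ Δ * (1 / (δ * K)) := mul_le_mul_of_nonneg_left h5 (by linarith)
      _ = Δ / (δ * K) := by ring
  have heA : (0:ℝ) ≤ Δ / (δ * K) :=
    div_nonneg (by linarith) (by positivity)
  have h1K : (1:ℝ) / K ≤ 1 := by
    rw [div_le_one hKpos]
    exact_mod_cast hK1
  -- Alice fiber bound
  have hAfiber : ∀ v : ℕ, ∑ t ∈ Sv v, uA vA a b t
      ≤ ((Sv v).card : ℝ) / 2 * (1 + Δ / (δ * K)) + 1 / 2 := by
    intro v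
    have hrw : ∀ t ∈ Sv v, uA vA a b t
        = (if Even (((Sv v).filter (· < t)).card)
            then (fun u => cumul vA (a u)) t else 1 - (fun u => cumul vA (a u)) t) := by
      intro t ht
      have htIcc : t ∈ Finset.Icc 1 T := (Finset.mem_filter.mp ht).1
      have hkm : km t = v := (Finset.mem_filter.mp ht).2
      have hbt' := hbt t htIcc
      rw [hkm] at hbt'
      by_cases hE : Even (((Sv v).filter (· < t)).card)
      · rw [if_pos hE] at hbt'
        simp [uA, hbt', hE]
      · rw [if_neg hE] at hbt'
        simp [uA, hbt', hE]
    rw [Finset.sum_congr rfl hrw]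
    have H := alt_upper_aux (fun u => cumul vA (a u)) (Δ / (δ * K)) (Sv v).card (Sv v) rfl
      (fun s' hs' t ht => hcloseA v s' hs' t ht)
    rcases Nat.even_or_odd (Sv v).card with hev | hod
    · have := H.1 hev
      linarith
    · have hne : (Sv v).Nonempty := Finset.card_pos.mp hod.pos
      have hM := H.2 ((Sv v).max' hne) (Finset.max'_mem _ hne)
        (fun u hu => Finset.le_max' _ u hu) (Nat.not_even_iff_odd.mpr hod)
      have hfM : cumul vA (a ((Sv v).max' hne)) ≤ 1 := by
        have hmem := Finset.max'_mem (Sv v) hne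
        exact (hVA01 _ ((Finset.mem_filter.mp hmem).1)).2
      have hident : (((Sv v).card : ℝ)) / 2 * (1 + Δ / (δ * K)) + 1 / 2
          - ((((Sv v).card : ℝ) - 1) / 2 * (1 + Δ / (δ * K)) + 1)
          = (Δ / (δ * K)) / 2 - 0 := by ring
      linarith
  -- Bob fiber bound
  have hBfiber : ∀ v : ℕ, (((Sv v).card : ℝ) - 1) / 2 * (1 - 1 / K)
      ≤ ∑ t ∈ Sv v, uB vB a b t := by
    intro v
    have hrw : ∀ t ∈ Sv v, uB vB a b t
        = (if Even (((Sv v).filter (· < t)).card)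
            then (fun u => 1 - cumul vB (a u)) t else 1 - (fun u => 1 - cumul vB (a u)) t) := by
      intro t ht
      have htIcc : t ∈ Finset.Icc 1 T := (Finset.mem_filter.mp ht).1
      have hkm : km t = v := (Finset.mem_filter.mp ht).2
      have hbt' := hbt t htIcc
      rw [hkm] at hbt'
      by_cases hE : Even (((Sv v).filter (· < t)).card)
      · rw [if_pos hE] at hbt'
        simp [uB, hbt', hE]
      · rw [if_neg hE] at hbt'
        simp only [uB, hbt', hE, if_neg hE]
        norm_num
    rw [Finset.sum_congr rfl hrw]
    have hdiffB : ∀ s' ∈ Sv v, ∀ t ∈ Sv v,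
        (fun u => 1 - cumul vB (a u)) s' - (fun u => 1 - cumul vB (a u)) t ≤ 1 / K := by
      intro s' hs' t ht
      have := hclose v t ht s' hs'
      have h' : cumul vB (a t) - cumul vB (a s') ≤ 1 / K := by
        calc cumul vB (a t) - cumul vB (a s') ≤ |cumul vB (a t) - cumul vB (a s')| := le_abs_self _
          _ ≤ 1 / K := this
      simpa using h'
    have H := alt_lower_aux (fun u => 1 - cumul vB (a u)) (1 / K) (Sv v).card (Sv v) rfl hdiffB
    rcases Nat.even_or_odd (Sv v).card with hev | hod
    · have := H.1 hev
      have hident : (((Sv v).card : ℝ)) / 2 * (1 - 1 / K)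
          - (((Sv v).card : ℝ) - 1) / 2 * (1 - 1 / K) = (1 - 1 / K) / 2 := by ring
      linarith
    · have hne : (Sv v).Nonempty := Finset.card_pos.mp hod.pos
      have hM := H.2 ((Sv v).max' hne) (Finset.max'_mem _ hne)
        (fun u hu => Finset.le_max' _ u hu) (Nat.not_even_iff_odd.mpr hod)
      have hfM : 0 ≤ 1 - cumul vB (a ((Sv v).max' hne)) := by
        have hmem := Finset.max'_mem (Sv v) hne
        have := (hVB01 _ ((Finset.mem_filter.mp hmem).1)).2
        linarith
      linarith
  -- fiber decomposition
  have hmaps : ∀ t ∈ Finset.Icc 1 T, km t ∈ Finset.range K := by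
    intro t _
    rw [Finset.mem_range]
    have : km t ≤ K - 1 := min_le_right _ _
    omega
  have hfibA := Finset.sum_fiberwise_of_maps_to hmaps (fun t => uA vA a b t)
  have hfibB := Finset.sum_fiberwise_of_maps_to hmaps (fun t => uB vB a b t)
  have hcT' : ∑ v ∈ Finset.range K, (Sv v).card = T := by
    have h := Finset.card_eq_sum_card_fiberwise hmaps
    rw [Nat.card_Icc] at h
    simp only [hSvdef]
    omega
  have hcT : ∑ v ∈ Finset.range K, ((Sv v).card : ℝ) = (T:ℝ) := by
    exact_mod_cast hcT'
  have hTK : (T:ℝ) ≤ s * K := by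
    calc (T:ℝ) = s * s := hss.symm
      _ ≤ s * K := mul_le_mul_of_nonneg_left hKges (by linarith)
  constructor
  · -- Alice bound
    rw [← hfibA]
    have hsum1 : ∑ v ∈ Finset.range K, ∑ t ∈ Sv v, uA vA a b t
        ≤ ∑ v ∈ Finset.range K,
          (((Sv v).card : ℝ) * ((1 + Δ / (δ * K)) / 2) + 1 / 2) := by
      refine Finset.sum_le_sum fun v _ => ?_
      have := hAfiber v
      have hident : ((Sv v).card : ℝ) / 2 * (1 + Δ / (δ * K))
          = ((Sv v).card : ℝ) * ((1 + Δ / (δ * K)) / 2) := by ring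
      linarith
    have hsum2 : ∑ v ∈ Finset.range K,
        (((Sv v).card : ℝ) * ((1 + Δ / (δ * K)) / 2) + 1 / 2)
        = (T:ℝ) * ((1 + Δ / (δ * K)) / 2) + (K:ℝ) * (1 / 2) := by
      rw [Finset.sum_add_distrib, ← Finset.sum_mul, hcT, Finset.sum_const,
        Finset.card_range, nsmul_eq_mul]
    have h2 : (T:ℝ) * (Δ / (δ * K) / 2) ≤ Δ / (2 * δ) * s := by
      rw [show (T:ℝ) * (Δ / (δ * K) / 2) = ((T:ℝ) * Δ) / (2 * (δ * K)) by ring,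
        show Δ / (2 * δ) * s = (s * (K:ℝ) * Δ) / (2 * (δ * K)) by
          field_simp
          try ring]
      rw [div_le_div_iff₀ (by positivity) (by positivity)]
      have hΔ0 : (0:ℝ) ≤ Δ := le_trans (le_of_lt hδ) hδΔ
      have hKK : (0:ℝ) ≤ 2 * (δ * (K:ℝ)) := by positivity
      linarith [mul_le_mul_of_nonneg_right
        (mul_le_mul_of_nonneg_right hTK hΔ0) hKK]
    have h3 : (K:ℝ) * (1 / 2) ≤ 2 * s := by linarith
    have hexp1 : (T:ℝ) * ((1 + Δ / (δ * K)) / 2)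
        = (T:ℝ) / 2 + (T:ℝ) * (Δ / (δ * K) / 2) := by ring
    have hexp2 : (Δ / (2 * δ) + 2) * s = Δ / (2 * δ) * s + 2 * s := by ring
    calc ∑ v ∈ Finset.range K, ∑ t ∈ Sv v, uA vA a b t
        ≤ (T:ℝ) * ((1 + Δ / (δ * K)) / 2) + (K:ℝ) * (1 / 2) := by rw [← hsum2]; exact hsum1
      _ ≤ (T:ℝ) / 2 + (Δ / (2 * δ) + 2) * s := by linarith [h2, h3, hexp1, hexp2]
  · -- Bob bound
    rw [← hfibB]
    have hsum1 : ∑ v ∈ Finset.range K,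
        (((Sv v).card : ℝ) * ((1 - 1 / K) / 2) - (1 - 1 / K) / 2)
        ≤ ∑ v ∈ Finset.range K, ∑ t ∈ Sv v, uB vB a b t := by
      refine Finset.sum_le_sum fun v _ => ?_
      have := hBfiber v
      have hident : (((Sv v).card : ℝ) - 1) / 2 * (1 - 1 / K)
          = ((Sv v).card : ℝ) * ((1 - 1 / K) / 2) - (1 - 1 / K) / 2 := by ring
      linarith
    have hsum2 : ∑ v ∈ Finset.range K,
        (((Sv v).card : ℝ) * ((1 - 1 / K) / 2) - (1 - 1 / K) / 2)
        = (T:ℝ) * ((1 - 1 / K) / 2) - (K:ℝ) * ((1 - 1 / K) / 2) := by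
      rw [Finset.sum_sub_distrib, ← Finset.sum_mul, hcT, Finset.sum_const,
        Finset.card_range, nsmul_eq_mul]
    have hKne : (K:ℝ) ≠ 0 := ne_of_gt hKpos
    have e1 : (T:ℝ) * ((1 - 1 / K) / 2) = (T:ℝ) / 2 - (T:ℝ) / (2 * K) := by
      field_simp
      try ring
    have e2 : (K:ℝ) * ((1 - 1 / K) / 2) = (K:ℝ) / 2 - 1 / 2 := by
      field_simp
      try ring
    have h5 : (T:ℝ) / (2 * K) ≤ s / 2 := by
      rw [div_le_div_iff₀ (by positivity) (by norm_num)]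
      linarith
    have h6 : (K:ℝ) / 2 ≤ (s + 1) / 2 := by linarith
    calc (T:ℝ) / 2 - s
        ≤ (T:ℝ) * ((1 - 1 / K) / 2) - (K:ℝ) * ((1 - 1 / K) / 2) := by
          rw [e1, e2]
          linarith
      _ = ∑ v ∈ Finset.range K,
            (((Sv v).card : ℝ) * ((1 - 1 / K) / 2) - (1 - 1 / K) / 2) := hsum2.symm
      _ ≤ ∑ v ∈ Finset.range K, ∑ t ∈ Sv v, uB vB a b t := hsum1
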